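/- In a red–black harmonic two-grid configuration, assume A, the Galerkin coarse matrices Ā = D̄ F̄_R A F̄_I Ū and Ã = D̃ F̃_R A F̃_I Ũ, and all four inter-grid filters F̄_I, F̄_R, F̃_I, F̃_R are non-singular. Then the multiplicative scheme is a direct solver, i.e. K̃ K̄ = 0 where K̄ = I − (F̄_I Ū) Ā⁻¹ (D̄ F̄_R) A and K̃ = I − (F̃_I Ũ) Ã⁻¹ (D̃ F̃_R) A, if and only if Π̄_{R,L} Λ_L Π̃_{I,L} = Π̄_{R,H} Λ_H Π̃_{I,H}. -/

import Mathlib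

open Matrix

/-- The red harmonic aliasing pattern `N̄ = (1/2)·[[I, I], [I, I]]`
(blocks of size `n`, acting on a fine grid of `2·n` nodes indexed by `Fin n ⊕ Fin n`). -/
noncomputable def Nbar (n : ℕ) : Matrix (Fin n ⊕ Fin n) (Fin n ⊕ Fin n) ℂ :=
  (1 / 2 : ℂ) • Matrix.fromBlocks 1 1 1 1

/-- The black harmonic aliasing pattern `Ñ = (1/2)·[[I, −I], [−I, I]]`. -/
noncomputable def Ntil (n : ℕ) : Matrix (Fin n ⊕ Fin n) (Fin n ⊕ Fin n) ℂ :=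
  (1 / 2 : ℂ) • Matrix.fromBlocks 1 (-1) (-1) 1

/-- `Dr` and `Db` are the red and black down-sampling matrices of a red–black
partition of the `2·n` fine-grid nodes into two halves: they are `{0,1}`-matrices,
the up-sampling matrices are their transposes, and they satisfy
`D̄Ū = I`, `D̃Ũ = I`, `D̃Ū = 0`, `D̄Ũ = 0` and `ŪD̄ + ŨD̃ = I`. -/
def IsRBPartition {n : ℕ} (Dr Db : Matrix (Fin n) (Fin n ⊕ Fin n) ℂ) : Prop :=
  (∀ i j, Dr i j = 0 ∨ Dr i j = 1) ∧ (∀ i j, Db i j = 0 ∨ Db i j = 1) ∧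
  Dr * Drᵀ = 1 ∧ Db * Dbᵀ = 1 ∧ Db * Drᵀ = 0 ∧ Dr * Dbᵀ = 0 ∧
  Drᵀ * Dr + Dbᵀ * Db = 1

namespace RBAux
variable {n : ℕ}

noncomputable def blk (a b c d : Fin n → ℂ) : Matrix (Fin n ⊕ Fin n) (Fin n ⊕ Fin n) ℂ :=
  Matrix.fromBlocks (diagonal a) (diagonal b) (diagonal c) (diagonal d)

theorem blk_mul (a b c d a' b' c' d' : Fin n → ℂ) :
    blk a b c d * blk a' b' c' d' =
      blk (fun k => a k * a' k + b k * c' k) (fun k => a k * b' k + b k * d' k)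
          (fun k => c k * a' k + d k * c' k) (fun k => c k * b' k + d k * d' k) := by
  simp [blk, fromBlocks_multiply, diagonal_mul_diagonal, diagonal_add]

theorem blk_one : (1 : Matrix (Fin n ⊕ Fin n) (Fin n ⊕ Fin n) ℂ) = blk 1 0 0 1 := by
  ext i j
  rcases i with i | i <;> rcases j with j | j <;>
    simp [blk, one_apply, diagonal_apply, Sum.inl.injEq, Sum.inr.injEq]

theorem blk_sub (a b c d a' b' c' d' : Fin n → ℂ) :
    blk a b c d - blk a' b' c' d' =
      blk (fun k => a k - a' k) (fun k => b k - b' k) (fun k => c k - c' k)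
        (fun k => d k - d' k) := by
  simp only [blk, sub_eq_add_neg, fromBlocks_neg, fromBlocks_add, diagonal_neg, diagonal_add]

theorem blk_congr {a b c d a' b' c' d' : Fin n → ℂ} (ha : ∀ k, a k = a' k) (hb : ∀ k, b k = b' k)
    (hc : ∀ k, c k = c' k) (hd : ∀ k, d k = d' k) : blk a b c d = blk a' b' c' d' := by
  rw [funext ha, funext hb, funext hc, funext hd]

theorem blk_eq_zero_iff (a b c d : Fin n → ℂ) :
    blk a b c d = 0 ↔ ∀ k, a k = 0 ∧ b k = 0 ∧ c k = 0 ∧ d k = 0 := by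
  constructor
  · intro h k
    refine ⟨?_, ?_, ?_, ?_⟩
    · have := congrFun (congrFun h (Sum.inl k)) (Sum.inl k); simpa [blk] using this
    · have := congrFun (congrFun h (Sum.inl k)) (Sum.inr k); simpa [blk] using this
    · have := congrFun (congrFun h (Sum.inr k)) (Sum.inl k); simpa [blk] using this
    · have := congrFun (congrFun h (Sum.inr k)) (Sum.inr k); simpa [blk] using this
  · intro h
    ext i j
    rcases i with i | i <;> rcases j with j | j <;>
      simp [blk, diagonal_apply, (h _).1, (h _).2.1, (h _).2.2.1, (h _).2.2.2]


theorem blk_dmul (a d a' d' : Fin n → ℂ) :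
    blk a 0 0 d * blk a' 0 0 d' =
      blk (fun k => a k * a' k) 0 0 (fun k => d k * d' k) := by
  rw [blk_mul]
  apply blk_congr <;> intro k <;> simp

section Conj

variable {W V : Matrix (Fin n ⊕ Fin n) (Fin n ⊕ Fin n) ℂ}

theorem conj_mul (hbi : Vᴴ * W = 1) (X Y : Matrix (Fin n ⊕ Fin n) (Fin n ⊕ Fin n) ℂ) :
    (W * X * Vᴴ) * (W * Y * Vᴴ) = W * (X * Y) * Vᴴ := by
  have hc : ∀ Z : Matrix (Fin n ⊕ Fin n) (Fin n ⊕ Fin n) ℂ, Vᴴ * (W * Z) = Z := fun Z => by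
    rw [← Matrix.mul_assoc, hbi, Matrix.one_mul]
  simp only [Matrix.mul_assoc, hc]

theorem conj_eq_zero_iff (hbi : Vᴴ * W = 1) (X : Matrix (Fin n ⊕ Fin n) (Fin n ⊕ Fin n) ℂ) :
    W * X * Vᴴ = 0 ↔ X = 0 := by
  constructor
  · intro h
    have : Vᴴ * (W * X * Vᴴ) * W = X := by
      simp only [Matrix.mul_assoc, ← Matrix.mul_assoc Vᴴ W, hbi, Matrix.one_mul,
        Matrix.mul_one]
    rw [h] at this
    simpa using this.symm
  · intro h; rw [h]; simp

theorem conj_sub (X Y : Matrix (Fin n ⊕ Fin n) (Fin n ⊕ Fin n) ℂ) :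
    W * X * Vᴴ - W * Y * Vᴴ = W * (X - Y) * Vᴴ := by
  rw [← Matrix.sub_mul, ← Matrix.mul_sub]

end Conj

section Key

variable {W V : Matrix (Fin n ⊕ Fin n) (Fin n ⊕ Fin n) ℂ}

theorem key_ne (D : Matrix (Fin n) (Fin n ⊕ Fin n) ℂ)
    (M : Matrix (Fin n ⊕ Fin n) (Fin n ⊕ Fin n) ℂ) (e : ℂ) (he : e * e = 1)
    (a1 a2 : Fin n → ℂ)
    (hbi : Vᴴ * W = 1) (hDD : D * Dᵀ = 1)
    (hP : Dᵀ * D = W * blk (fun _ => (2:ℂ)⁻¹) (fun _ => e/2) (fun _ => e/2)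
      (fun _ => (2:ℂ)⁻¹) * Vᴴ)
    (hM : M = W * blk a1 0 0 a2 * Vᴴ)
    (hU : IsUnit (D * M * Dᵀ)) (k : Fin n) : a1 k + a2 k ≠ 0 := by
  intro hk
  set N : Matrix (Fin n ⊕ Fin n) (Fin n ⊕ Fin n) ℂ :=
    blk (fun _ => (2:ℂ)⁻¹) (fun _ => e/2) (fun _ => e/2) (fun _ => (2:ℂ)⁻¹) with hN
  set x : (Fin n ⊕ Fin n) → ℂ := Pi.single (Sum.inl k) 1 with hx
  set NSN : Matrix (Fin n ⊕ Fin n) (Fin n ⊕ Fin n) ℂ := N * (blk a1 0 0 a2 * N) with hNSN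
  have hcv : ∀ (Y : Matrix (Fin n ⊕ Fin n) (Fin n ⊕ Fin n) ℂ) (y : (Fin n ⊕ Fin n) → ℂ),
      (W * Y * Vᴴ) *ᵥ (W *ᵥ y) = W *ᵥ (Y *ᵥ y) := by
    intro Y y
    rw [mulVec_mulVec, Matrix.mul_assoc, Matrix.mul_assoc, hbi, Matrix.mul_one,
      ← mulVec_mulVec]
  have h0 : NSN *ᵥ x = 0 := by
    rw [hNSN, blk_mul, blk_mul, hx]
    rw [mulVec_single_one]
    funext i
    rcases i with i | i
    · simp only [col_apply, blk, fromBlocks_apply₁₁, diagonal_apply, Pi.zero_apply]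
      split
      · rename_i hik
        rw [hik]
        linear_combination (1/4 : ℂ) * hk + (a2 k / 4) * he
      · simp
    · simp only [col_apply, blk, fromBlocks_apply₂₁, diagonal_apply, Pi.zero_apply]
      split
      · rename_i hik
        rw [hik]
        linear_combination (e/4) * hk
      · simp
  -- now the contradiction chain
  have h1 : ((Dᵀ * D) * (M * (Dᵀ * D))) *ᵥ (W *ᵥ x) = 0 := by
    rw [hP, hM, conj_mul hbi, conj_mul hbi, hcv, ← hNSN, h0, mulVec_zero]
  have h2 : (D * M * Dᵀ) *ᵥ (D *ᵥ (W *ᵥ x)) = 0 := by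
    have hassoc : (D * M * Dᵀ) * D = D * ((Dᵀ * D) * (M * (Dᵀ * D))) := by
      simp only [← Matrix.mul_assoc]
      rw [hDD, Matrix.one_mul]
    rw [mulVec_mulVec, hassoc, ← mulVec_mulVec, h1, mulVec_zero]
  have h3 : D *ᵥ (W *ᵥ x) = 0 := by
    have hBA : (↑hU.unit⁻¹ : Matrix (Fin n) (Fin n) ℂ) * (D * M * Dᵀ) = 1 := by
      exact hU.val_inv_mul
    calc D *ᵥ (W *ᵥ x) = ((↑hU.unit⁻¹ : Matrix (Fin n) (Fin n) ℂ) * (D * M * Dᵀ)) *ᵥ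
          (D *ᵥ (W *ᵥ x)) := by rw [hBA, Matrix.one_mulVec]
      _ = (↑hU.unit⁻¹ : Matrix (Fin n) (Fin n) ℂ) *ᵥ ((D * M * Dᵀ) *ᵥ (D *ᵥ (W *ᵥ x))) := by
          simp only [mulVec_mulVec, Matrix.mul_assoc]
      _ = 0 := by rw [h2, mulVec_zero]
  have h4 : N *ᵥ x = 0 := by
    have h5 : W *ᵥ (N *ᵥ x) = 0 := by
      rw [← hcv N x, ← hP, ← mulVec_mulVec, h3, mulVec_zero]
    have h6 : Vᴴ *ᵥ (W *ᵥ (N *ᵥ x)) = N *ᵥ x := by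
      rw [mulVec_mulVec, hbi, Matrix.one_mulVec]
    rw [h5, mulVec_zero] at h6
    exact h6.symm
  have h7 := congrFun h4 (Sum.inl k)
  simp [hx, hN, blk] at h7

theorem key_inv (D : Matrix (Fin n) (Fin n ⊕ Fin n) ℂ)
    (M : Matrix (Fin n ⊕ Fin n) (Fin n ⊕ Fin n) ℂ) (e : ℂ) (he : e * e = 1)
    (a1 a2 : Fin n → ℂ) (hs : ∀ k, a1 k + a2 k ≠ 0)
    (hbi : Vᴴ * W = 1) (hDD : D * Dᵀ = 1)
    (hP : Dᵀ * D = W * blk (fun _ => (2:ℂ)⁻¹) (fun _ => e/2) (fun _ => e/2)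
      (fun _ => (2:ℂ)⁻¹) * Vᴴ)
    (hM : M = W * blk a1 0 0 a2 * Vᴴ)
    (hU : IsUnit (D * M * Dᵀ)) :
    Dᵀ * (D * M * Dᵀ)⁻¹ * D =
      W * blk (fun k => (a1 k + a2 k)⁻¹) (fun k => e * (a1 k + a2 k)⁻¹)
        (fun k => e * (a1 k + a2 k)⁻¹) (fun k => (a1 k + a2 k)⁻¹) * Vᴴ := by
  set N : Matrix (Fin n ⊕ Fin n) (Fin n ⊕ Fin n) ℂ :=
    blk (fun _ => (2:ℂ)⁻¹) (fun _ => e/2) (fun _ => e/2) (fun _ => (2:ℂ)⁻¹) with hN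
  set G : Matrix (Fin n ⊕ Fin n) (Fin n ⊕ Fin n) ℂ :=
    blk (fun k => (a1 k + a2 k)⁻¹) (fun k => e * (a1 k + a2 k)⁻¹)
      (fun k => e * (a1 k + a2 k)⁻¹) (fun k => (a1 k + a2 k)⁻¹) with hG
  set J : Matrix (Fin n ⊕ Fin n) (Fin n ⊕ Fin n) ℂ := W * G * Vᴴ with hJ
  have hNG : N * G = G := by
    rw [hN, hG, blk_mul]
    apply blk_congr <;> intro k
    · linear_combination ((a1 k + a2 k)⁻¹ / 2) * he
    · ring
    · ring
    · linear_combination ((a1 k + a2 k)⁻¹ / 2) * he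
  have hNSNG : N * (blk a1 0 0 a2 * G) = N := by
    rw [hN, hG, blk_mul, blk_mul]
    apply blk_congr <;> intro k <;>
      simp only [Pi.zero_apply, zero_mul, mul_zero, add_zero, zero_add]
    · linear_combination (a2 k * (a1 k + a2 k)⁻¹ / 2) * he +
        (1/2 : ℂ) * (mul_inv_cancel₀ (hs k))
    · linear_combination (e/2) * (mul_inv_cancel₀ (hs k))
    · linear_combination (e/2) * (mul_inv_cancel₀ (hs k))
    · linear_combination (a1 k * (a1 k + a2 k)⁻¹ / 2) * he +
        (1/2 : ℂ) * (mul_inv_cancel₀ (hs k))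
  have step1 : (Dᵀ * D) * (M * ((Dᵀ * D) * J)) = Dᵀ * D := by
    rw [hP, hM, hJ]
    rw [conj_mul hbi N G, conj_mul hbi (blk a1 0 0 a2) (N * G),
      conj_mul hbi N (blk a1 0 0 a2 * (N * G))]
    rw [hNG, hNSNG]
  have step2 : D * M * Dᵀ * D * J = D := by
    have h1 : D * ((Dᵀ * D) * (M * ((Dᵀ * D) * J))) = D * (Dᵀ * D) := by rw [step1]
    simp only [← Matrix.mul_assoc] at h1
    rw [hDD, Matrix.one_mul] at h1
    simpa using h1
  have hdet : IsUnit (D * M * Dᵀ).det := (Matrix.isUnit_iff_isUnit_det _).mp hU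
  have hinv : (D * M * Dᵀ)⁻¹ * (D * M * Dᵀ) = 1 := Matrix.nonsing_inv_mul _ hdet
  have hDJ : D * J = (D * M * Dᵀ)⁻¹ * D := by
    have h2 : (D * M * Dᵀ)⁻¹ * ((D * M * Dᵀ) * (D * J)) = (D * M * Dᵀ)⁻¹ * D := by
      rw [show (D * M * Dᵀ) * (D * J) = D * M * Dᵀ * D * J by simp only [Matrix.mul_assoc],
        step2]
    rwa [← Matrix.mul_assoc, hinv, Matrix.one_mul] at h2
  calc Dᵀ * (D * M * Dᵀ)⁻¹ * D = Dᵀ * ((D * M * Dᵀ)⁻¹ * D) := by rw [Matrix.mul_assoc]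
    _ = (Dᵀ * D) * J := by rw [← hDJ, Matrix.mul_assoc]
    _ = W * G * Vᴴ := by rw [hP, hJ, conj_mul hbi N G, hNG]

end Key

theorem scalar_iff (b1 b2 p1 p2 c1 c2 q1 q2 : ℂ)
    (hs : b1 * p1 + b2 * p2 ≠ 0) (ht : c1 * q1 + c2 * q2 ≠ 0) :
    ((1 - c1 * q1 * (c1 * q1 + c2 * q2)⁻¹) * (1 - b1 * p1 * (b1 * p1 + b2 * p2)⁻¹) +
        c2 * q1 * (c1 * q1 + c2 * q2)⁻¹ * -(b1 * p2 * (b1 * p1 + b2 * p2)⁻¹) = 0 ∧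
      (1 - c1 * q1 * (c1 * q1 + c2 * q2)⁻¹) * -(b2 * p1 * (b1 * p1 + b2 * p2)⁻¹) +
        c2 * q1 * (c1 * q1 + c2 * q2)⁻¹ * (1 - b2 * p2 * (b1 * p1 + b2 * p2)⁻¹) = 0 ∧
      c1 * q2 * (c1 * q1 + c2 * q2)⁻¹ * (1 - b1 * p1 * (b1 * p1 + b2 * p2)⁻¹) +
        (1 - c2 * q2 * (c1 * q1 + c2 * q2)⁻¹) * -(b1 * p2 * (b1 * p1 + b2 * p2)⁻¹) = 0 ∧
      c1 * q2 * (c1 * q1 + c2 * q2)⁻¹ * -(b2 * p1 * (b1 * p1 + b2 * p2)⁻¹) +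
        (1 - c2 * q2 * (c1 * q1 + c2 * q2)⁻¹) * (1 - b2 * p2 * (b1 * p1 + b2 * p2)⁻¹) = 0) ↔
    b1 * q1 = b2 * q2 := by
  constructor
  · rintro ⟨h11, h12, h21, h22⟩
    field_simp at h11 h12 h21 h22
    have hst : (c1 * q1 + c2 * q2) * (b1 * p1 + b2 * p2) ≠ 0 := mul_ne_zero ht hs
    have e1 : c2 * p2 * (b1 * q1 - b2 * q2) = 0 := by linear_combination -h11
    have e2 : c2 * p1 * (b1 * q1 - b2 * q2) = 0 := by
      have e2' : c2 * p1 * (b1 * q1 - b2 * q2) * ((c1 * q1 + c2 * q2) * (b1 * p1 + b2 * p2))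
          = 0 := by linear_combination ((c1 * q1 + c2 * q2) * (b1 * p1 + b2 * p2)) * h12
      rcases mul_eq_zero.mp e2' with h | h
      · exact h
      · exact absurd h hst
    have e3 : c1 * p2 * (b1 * q1 - b2 * q2) = 0 := by linear_combination -h21
    have e4 : c1 * p1 * (b1 * q1 - b2 * q2) = 0 := by
      have e4' : c1 * p1 * (b1 * q1 - b2 * q2) * ((c1 * q1 + c2 * q2) * (b1 * p1 + b2 * p2))
          = 0 := by linear_combination ((c1 * q1 + c2 * q2) * (b1 * p1 + b2 * p2)) * h22
      rcases mul_eq_zero.mp e4' with h | h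
      · exact h
      · exact absurd h hst
    by_contra hne
    have hu : b1 * q1 - b2 * q2 ≠ 0 := sub_ne_zero.mpr hne
    have f1 : c2 * p2 = 0 := by rcases mul_eq_zero.mp e1 with h | h; exacts [h, absurd h hu]
    have f2 : c2 * p1 = 0 := by rcases mul_eq_zero.mp e2 with h | h; exacts [h, absurd h hu]
    have f3 : c1 * p2 = 0 := by rcases mul_eq_zero.mp e3 with h | h; exacts [h, absurd h hu]
    have f4 : c1 * p1 = 0 := by rcases mul_eq_zero.mp e4 with h | h; exacts [h, absurd h hu]
    have : (b1 * p1 + b2 * p2) * (c1 * q1 + c2 * q2) = 0 := by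
      linear_combination b1 * q1 * f4 + b1 * q2 * f2 + b2 * q1 * f3 + b2 * q2 * f1
    exact absurd this (mul_ne_zero hs ht)
  · intro hcond
    have hS := mul_inv_cancel₀ hs
    have hT := mul_inv_cancel₀ ht
    refine ⟨?_, ?_, ?_, ?_⟩
    · field_simp
      linear_combination (-(c2 * p2)) * hcond
    · linear_combination (c2 * p1 * (c1 * q1 + c2 * q2)⁻¹ * (b1 * p1 + b2 * p2)⁻¹) * hcond +
        (b2 * p1 * (b1 * p1 + b2 * p2)⁻¹) * hT + (-(c2 * q1 * (c1 * q1 + c2 * q2)⁻¹)) * hS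
    · linear_combination (-(c1 * p2 * (c1 * q1 + c2 * q2)⁻¹ * (b1 * p1 + b2 * p2)⁻¹)) * hcond +
        (-(c1 * q2 * (c1 * q1 + c2 * q2)⁻¹)) * hS + (b1 * p2 * (b1 * p1 + b2 * p2)⁻¹) * hT
    · linear_combination (c1 * p1 * (c1 * q1 + c2 * q2)⁻¹ * (b1 * p1 + b2 * p2)⁻¹) * hcond +
        (-(c1 * q1 * (c1 * q1 + c2 * q2)⁻¹)) * hS +
        (-(1 - b2 * p2 * (b1 * p1 + b2 * p2)⁻¹)) * hT

end RBAux

open RBAux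


/-- In a red–black harmonic two-grid configuration with `A`, both Galerkin
coarse matrices and all four inter-grid filters non-singular, the multiplicative
scheme is a direct solver, `K̃ K̄ = 0`, iff
`Π̄_{R,L} Λ_L Π̃_{I,L} = Π̄_{R,H} Λ_H Π̃_{I,H}`. -/
theorem multiplicative_direct_iff_symbol_condition {n : ℕ}
    (Dr Db : Matrix (Fin n) (Fin n ⊕ Fin n) ℂ)
    (hpart : IsRBPartition Dr Db)
    (W V A : Matrix (Fin n ⊕ Fin n) (Fin n ⊕ Fin n) ℂ)
    (lamL lamH : Fin n → ℂ)
    (hbi : Vᴴ * W = 1)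
    (hred : Vᴴ * (Drᵀ * Dr) * W = Nbar n)
    (hblack : Vᴴ * (Dbᵀ * Db) * W = Ntil n)
    (hA : A = W * Matrix.fromBlocks (diagonal lamL) 0 0 (diagonal lamH) * Vᴴ)
    (pRL pRH pIL pIH qRL qRH qIL qIH : Fin n → ℂ)
    (FbarR FbarI FtilR FtilI : Matrix (Fin n ⊕ Fin n) (Fin n ⊕ Fin n) ℂ)
    (hFbarR : FbarR = W * Matrix.fromBlocks (diagonal pRL) 0 0 (diagonal pRH) * Vᴴ)
    (hFbarI : FbarI = W * Matrix.fromBlocks (diagonal pIL) 0 0 (diagonal pIH) * Vᴴ)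
    (hFtilR : FtilR = W * Matrix.fromBlocks (diagonal qRL) 0 0 (diagonal qRH) * Vᴴ)
    (hFtilI : FtilI = W * Matrix.fromBlocks (diagonal qIL) 0 0 (diagonal qIH) * Vᴴ)
    (hAu : IsUnit A)
    (hAbar : IsUnit (Dr * FbarR * A * FbarI * Drᵀ))
    (hAtil : IsUnit (Db * FtilR * A * FtilI * Dbᵀ))
    (hFbarRu : IsUnit FbarR) (hFbarIu : IsUnit FbarI)
    (hFtilRu : IsUnit FtilR) (hFtilIu : IsUnit FtilI) :
    (1 - (FtilI * Dbᵀ) * (Db * FtilR * A * FtilI * Dbᵀ)⁻¹ * (Db * FtilR) * A) *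
        (1 - (FbarI * Drᵀ) * (Dr * FbarR * A * FbarI * Drᵀ)⁻¹ * (Dr * FbarR) * A) = 0 ↔
      diagonal pRL * diagonal lamL * diagonal qIL =
        diagonal pRH * diagonal lamH * diagonal qIH := by
  obtain ⟨-, -, hrr, hbb, -, -, -⟩ := hpart
  have hWV : W * Vᴴ = 1 := mul_eq_one_comm.mp hbi
  have hsym : ∀ (X Y : Matrix (Fin n ⊕ Fin n) (Fin n ⊕ Fin n) ℂ),
      Vᴴ * X * W = Y → X = W * Y * Vᴴ := by
    intro X Y hXY
    calc X = (W * Vᴴ) * X * (W * Vᴴ) := by rw [hWV, Matrix.one_mul, Matrix.mul_one]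
      _ = W * (Vᴴ * X * W) * Vᴴ := by simp only [Matrix.mul_assoc]
      _ = W * Y * Vᴴ := by rw [hXY]
  have hfb : ∀ (u v : Fin n → ℂ),
      Matrix.fromBlocks (diagonal u) 0 0 (diagonal v) = blk u 0 0 v := by
    intro u v
    have h0 : diagonal (0 : Fin n → ℂ) = 0 := by
      ext i j; simp [diagonal_apply]
    simp only [blk, h0]
  have hNbar : Nbar n = blk (fun _ => (2:ℂ)⁻¹) (fun _ => (1:ℂ)/2) (fun _ => (1:ℂ)/2)
      (fun _ => (2:ℂ)⁻¹) := by
    ext i j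
    rcases i with i | i <;> rcases j with j | j <;>
        simp [Nbar, blk, one_apply, diagonal_apply] <;> split <;> norm_num
  have hNtil : Ntil n = blk (fun _ => (2:ℂ)⁻¹) (fun _ => (-1:ℂ)/2) (fun _ => (-1:ℂ)/2)
      (fun _ => (2:ℂ)⁻¹) := by
    ext i j
    rcases i with i | i <;> rcases j with j | j <;>
        simp [Ntil, blk, one_apply, diagonal_apply] <;> split <;> norm_num
  have hPr : Drᵀ * Dr = W * blk (fun _ => (2:ℂ)⁻¹) (fun _ => (1:ℂ)/2) (fun _ => (1:ℂ)/2)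
      (fun _ => (2:ℂ)⁻¹) * Vᴴ := by rw [← hNbar]; exact hsym _ _ hred
  have hPb : Dbᵀ * Db = W * blk (fun _ => (2:ℂ)⁻¹) (fun _ => (-1:ℂ)/2) (fun _ => (-1:ℂ)/2)
      (fun _ => (2:ℂ)⁻¹) * Vᴴ := by rw [← hNtil]; exact hsym _ _ hblack
  -- symbols of the Galerkin products
  have hMr : FbarR * A * FbarI =
      W * blk (fun k => pRL k * lamL k * pIL k) 0 0 (fun k => pRH k * lamH k * pIH k) * Vᴴ := by
    rw [hFbarR, hA, hFbarI, hfb, hfb, hfb, conj_mul hbi, blk_dmul, conj_mul hbi, blk_dmul]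
  have hMb : FtilR * A * FtilI =
      W * blk (fun k => qRL k * lamL k * qIL k) 0 0 (fun k => qRH k * lamH k * qIH k) * Vᴴ := by
    rw [hFtilR, hA, hFtilI, hfb, hfb, hfb, conj_mul hbi, blk_dmul, conj_mul hbi, blk_dmul]
  have hUr : IsUnit (Dr * (FbarR * A * FbarI) * Drᵀ) := by
    rw [show Dr * (FbarR * A * FbarI) * Drᵀ = Dr * FbarR * A * FbarI * Drᵀ by
      simp only [Matrix.mul_assoc]]
    exact hAbar
  have hUb : IsUnit (Db * (FtilR * A * FtilI) * Dbᵀ) := by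
    rw [show Db * (FtilR * A * FtilI) * Dbᵀ = Db * FtilR * A * FtilI * Dbᵀ by
      simp only [Matrix.mul_assoc]]
    exact hAtil
  have hsr : ∀ k, pRL k * lamL k * pIL k + pRH k * lamH k * pIH k ≠ 0 :=
    key_ne Dr (FbarR * A * FbarI) 1 (by norm_num) _ _ hbi hrr hPr hMr hUr
  have hst : ∀ k, qRL k * lamL k * qIL k + qRH k * lamH k * qIH k ≠ 0 :=
    key_ne Db (FtilR * A * FtilI) (-1) (by norm_num) _ _ hbi hbb hPb hMb hUb
  have hJr := key_inv Dr (FbarR * A * FbarI) 1 (by norm_num) _ _ hsr hbi hrr hPr hMr hUr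
  have hJb := key_inv Db (FtilR * A * FtilI) (-1) (by norm_num) _ _ hst hbi hbb hPb hMb hUb
  have hBr : FbarR * A =
      W * blk (fun k => pRL k * lamL k) 0 0 (fun k => pRH k * lamH k) * Vᴴ := by
    rw [hFbarR, hA, hfb, hfb, conj_mul hbi, blk_dmul]
  have hBb : FtilR * A =
      W * blk (fun k => qRL k * lamL k) 0 0 (fun k => qRH k * lamH k) * Vᴴ := by
    rw [hFtilR, hA, hfb, hfb, conj_mul hbi, blk_dmul]
  have hone : (1 : Matrix (Fin n ⊕ Fin n) (Fin n ⊕ Fin n) ℂ) = W * 1 * Vᴴ := by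
    rw [Matrix.mul_one, hWV]
  have hKbar :
      1 - (FbarI * Drᵀ) * (Dr * FbarR * A * FbarI * Drᵀ)⁻¹ * (Dr * FbarR) * A =
        W * blk
          (fun k => 1 - pRL k * lamL k * pIL k *
            (pRL k * lamL k * pIL k + pRH k * lamH k * pIH k)⁻¹)
          (fun k => -(pRH k * lamH k * pIL k *
            (pRL k * lamL k * pIL k + pRH k * lamH k * pIH k)⁻¹))
          (fun k => -(pRL k * lamL k * pIH k *
            (pRL k * lamL k * pIL k + pRH k * lamH k * pIH k)⁻¹))
          (fun k => 1 - pRH k * lamH k * pIH k *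
            (pRL k * lamL k * pIL k + pRH k * lamH k * pIH k)⁻¹) * Vᴴ := by
    have h1 : (FbarI * Drᵀ) * (Dr * FbarR * A * FbarI * Drᵀ)⁻¹ * (Dr * FbarR) * A =
        FbarI * ((Drᵀ * (Dr * (FbarR * A * FbarI) * Drᵀ)⁻¹ * Dr) * (FbarR * A)) := by
      rw [show Dr * (FbarR * A * FbarI) * Drᵀ = Dr * FbarR * A * FbarI * Drᵀ by
        simp only [Matrix.mul_assoc]]
      simp only [Matrix.mul_assoc]
    rw [h1, hJr, hBr, hFbarI, hfb, conj_mul hbi, conj_mul hbi, blk_mul, blk_mul]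
    rw [hone, conj_sub, blk_one, blk_sub]
    congr 1
    congr 1
    apply blk_congr <;> intro k <;>
      simp only [Pi.zero_apply, Pi.one_apply] <;> ring
  have hKtil :
      1 - (FtilI * Dbᵀ) * (Db * FtilR * A * FtilI * Dbᵀ)⁻¹ * (Db * FtilR) * A =
        W * blk
          (fun k => 1 - qRL k * lamL k * qIL k *
            (qRL k * lamL k * qIL k + qRH k * lamH k * qIH k)⁻¹)
          (fun k => qRH k * lamH k * qIL k *
            (qRL k * lamL k * qIL k + qRH k * lamH k * qIH k)⁻¹)
          (fun k => qRL k * lamL k * qIH k *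
            (qRL k * lamL k * qIL k + qRH k * lamH k * qIH k)⁻¹)
          (fun k => 1 - qRH k * lamH k * qIH k *
            (qRL k * lamL k * qIL k + qRH k * lamH k * qIH k)⁻¹) * Vᴴ := by
    have h1 : (FtilI * Dbᵀ) * (Db * FtilR * A * FtilI * Dbᵀ)⁻¹ * (Db * FtilR) * A =
        FtilI * ((Dbᵀ * (Db * (FtilR * A * FtilI) * Dbᵀ)⁻¹ * Db) * (FtilR * A)) := by
      rw [show Db * (FtilR * A * FtilI) * Dbᵀ = Db * FtilR * A * FtilI * Dbᵀ by
        simp only [Matrix.mul_assoc]]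
      simp only [Matrix.mul_assoc]
    rw [h1, hJb, hBb, hFtilI, hfb, conj_mul hbi, conj_mul hbi, blk_mul, blk_mul]
    rw [hone, conj_sub, blk_one, blk_sub]
    congr 1
    congr 1
    apply blk_congr <;> intro k <;>
      simp only [Pi.zero_apply, Pi.one_apply] <;> ring
  rw [hKtil, hKbar, conj_mul hbi, conj_eq_zero_iff hbi, blk_mul, blk_eq_zero_iff]
  rw [diagonal_mul_diagonal, diagonal_mul_diagonal, diagonal_mul_diagonal,
    diagonal_mul_diagonal, Matrix.diagonal_injective.eq_iff, funext_iff]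
  exact forall_congr' fun k =>
    scalar_iff (pRL k * lamL k) (pRH k * lamH k) (pIL k) (pIH k)
      (qRL k * lamL k) (qRH k * lamH k) (qIL k) (qIH k) (hsr k) (hst k)
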